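/- Let G be a countably infinite group, (Y₀, ν₀) a probability space, and X = Y₀^G equipped with the infinite product probability measure μ = ⊗_{g∈G} ν₀. For g ∈ G let σ_g : X → X be the Bernoulli shift σ_g(x)(h) = x(g⁻¹h). Then each σ_g is measurable and measure-preserving with respect to μ, and the action is mixing: for all measurable sets A, B ⊆ X, the measures μ(A ∩ σ_g⁻¹(B)) converge to μ(A)·μ(B) as g → ∞, i.e. along the cofinite filter on G. -/

import Mathlib

open MeasureTheory Filter


set_option linter.unusedSectionVars false
open MeasureTheory Filter MeasurableSpace

section Aux

variable {G : Type*} [Group G] {Y₀ : Type*} [MeasurableSpace Y₀]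

/-- The algebra of sets depending measurably on finitely many coordinates. -/
def cylAlg (G Y₀ : Type*) [MeasurableSpace Y₀] : Set (Set (G → Y₀)) :=
  {S | ∃ (s : Finset G) (E : Set (∀ _ : s, Y₀)), MeasurableSet E ∧
    S = (fun (x : G → Y₀) (i : s) => x (i : G)) ⁻¹' E}

lemma measurable_restr (s : Finset G) :
    Measurable (fun (x : G → Y₀) (i : s) => x (i : G)) :=
  measurable_pi_lambda _ fun _ => measurable_pi_apply _

lemma cylAlg_subset {s u : Finset G} (hsu : s ⊆ u) (E : Set (∀ _ : s, Y₀))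
    (hE : MeasurableSet E) :
    ∃ F : Set (∀ _ : u, Y₀), MeasurableSet F ∧
      ((fun (x : G → Y₀) (i : s) => x (i : G)) ⁻¹' E)
        = (fun (x : G → Y₀) (i : u) => x (i : G)) ⁻¹' F :=
  ⟨(fun (y : ∀ _ : u, Y₀) (i : s) => y ⟨i.1, hsu i.2⟩) ⁻¹' E,
    (measurable_pi_lambda _ fun _ => measurable_pi_apply _) hE, rfl⟩

lemma isSetAlgebra_cylAlg : IsSetAlgebra (cylAlg G Y₀) where
  empty_mem := ⟨∅, ∅, MeasurableSet.empty, by simp⟩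
  compl_mem := by
    rintro S ⟨s, E, hE, rfl⟩
    exact ⟨s, Eᶜ, hE.compl, by rw [Set.preimage_compl]⟩
  union_mem := by
    rintro S T ⟨s, E, hE, rfl⟩ ⟨t, F, hF, rfl⟩
    classical
    obtain ⟨E', hE', hEe⟩ := cylAlg_subset (Finset.subset_union_left (s₂ := t)) E hE
    obtain ⟨F', hF', hFe⟩ := cylAlg_subset (Finset.subset_union_right (s₁ := s)) F hF
    exact ⟨s ∪ t, E' ∪ F', hE'.union hF', by rw [hEe, hFe, Set.preimage_union]⟩

lemma generateFrom_cylAlg :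
    (MeasurableSpace.pi : MeasurableSpace (G → Y₀)) = generateFrom (cylAlg G Y₀) := by
  apply le_antisymm
  · show (⨆ g : G, MeasurableSpace.comap (fun (x : G → Y₀) => x g) inferInstance) ≤ _
    refine iSup_le fun g => measurable_iff_comap_le.mp ?_
    intro E hE
    apply measurableSet_generateFrom
    exact ⟨{g}, (fun (y : ∀ _ : ({g} : Finset G), Y₀) =>
      y ⟨g, Finset.mem_singleton_self g⟩) ⁻¹' E, (measurable_pi_apply _) hE, rfl⟩
  · refine generateFrom_le ?_
    rintro S ⟨s, E, hE, rfl⟩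
    exact measurable_restr s hE

end Aux

section Aux2

variable {G : Type*} [Group G] {Y₀ : Type*} [MeasurableSpace Y₀]

/-- Rectangular cylinders. -/
def rectCyl (G Y₀ : Type*) [MeasurableSpace Y₀] : Set (Set (G → Y₀)) :=
  {S | ∃ (s : Finset G) (B : G → Set Y₀), (∀ g, MeasurableSet (B g)) ∧
    S = {x | ∀ g ∈ s, x g ∈ B g}}

omit [Group G] in
lemma measurableSet_rectCyl {S : Set (G → Y₀)} (hS : S ∈ rectCyl G Y₀) : MeasurableSet S := by
  obtain ⟨s, B, hB, rfl⟩ := hS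
  have : {x : G → Y₀ | ∀ g ∈ s, x g ∈ B g} = ⋂ g ∈ s, (fun x : G → Y₀ => x g) ⁻¹' B g := by
    ext x; simp
  rw [this]
  exact MeasurableSet.biInter s.countable_toSet fun g _ => (measurable_pi_apply g) (hB g)

omit [Group G] in
lemma isPiSystem_rectCyl : IsPiSystem (rectCyl G Y₀) := by
  rintro S ⟨s, B, hB, rfl⟩ T ⟨t, C, hC, rfl⟩ -
  classical
  refine ⟨s ∪ t, fun g => (if g ∈ s then B g else Set.univ) ∩ (if g ∈ t then C g else Set.univ),
    fun g => ?_, ?_⟩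
  · refine MeasurableSet.inter ?_ ?_ <;> split_ifs <;>
      first | exact hB _ | exact hC _ | exact MeasurableSet.univ
  · ext x
    simp only [Set.mem_inter_iff, Set.mem_setOf_eq, Finset.mem_union]
    constructor
    · rintro ⟨h1, h2⟩ g hg
      constructor
      · split_ifs with h; exacts [h1 g h, Set.mem_univ _]
      · split_ifs with h; exacts [h2 g h, Set.mem_univ _]
    · intro h
      constructor
      · intro g hg; have := (h g (Or.inl hg)).1; rwa [if_pos hg] at this
      · intro g hg; have := (h g (Or.inr hg)).2; rwa [if_pos hg] at this

omit [Group G] in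
lemma generateFrom_rectCyl :
    (MeasurableSpace.pi : MeasurableSpace (G → Y₀)) = generateFrom (rectCyl G Y₀) := by
  apply le_antisymm
  · show (⨆ g : G, MeasurableSpace.comap (fun (x : G → Y₀) => x g) inferInstance) ≤ _
    refine iSup_le fun g => measurable_iff_comap_le.mp ?_
    intro E hE
    apply measurableSet_generateFrom
    refine ⟨{g}, fun _ => E, fun _ => hE, ?_⟩
    ext x; simp
  · exact generateFrom_le fun S hS => measurableSet_rectCyl hS

variable (ν₀ : Measure Y₀) (μ : Measure (G → Y₀)) [IsProbabilityMeasure μ]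
  (hμ : ∀ (s : Finset G) (B : G → Set Y₀), (∀ g : G, MeasurableSet (B g)) →
      μ {x : G → Y₀ | ∀ g ∈ s, x g ∈ B g} = ∏ g ∈ s, ν₀ (B g))

include hμ in
lemma iIndep_eval :
    ProbabilityTheory.iIndepFun
      (fun g (x : G → Y₀) => x g) μ := by
  rw [ProbabilityTheory.iIndepFun_iff_measure_inter_preimage_eq_mul]
  intro S sets hsets
  classical
  set B : G → Set Y₀ := fun g => if g ∈ S then sets g else Set.univ with hB
  have hBm : ∀ g, MeasurableSet (B g) := by
    intro g
    by_cases h : g ∈ S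
    · simpa [B, h] using hsets g h
    · simp [B, h]
  have h2 : ∀ g ∈ S, μ ((fun x : G → Y₀ => x g) ⁻¹' sets g) = ν₀ (sets g) := by
    intro g hg
    have h := hμ {g} B hBm
    have hset : {x : G → Y₀ | ∀ h ∈ ({g} : Finset G), x h ∈ B h}
        = (fun x : G → Y₀ => x g) ⁻¹' sets g := by
      ext x; simp [B, hg]
    rw [hset] at h
    rw [h, Finset.prod_singleton]
    simp [B, hg]
  have h1 : (⋂ g ∈ S, (fun x : G → Y₀ => x g) ⁻¹' sets g)
      = {x : G → Y₀ | ∀ g ∈ S, x g ∈ B g} := by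
    ext x
    simp only [Set.mem_iInter, Set.mem_preimage, Set.mem_setOf_eq]
    refine forall₂_congr fun g hg => ?_
    simp [B, hg]
  rw [h1, hμ S B hBm]
  refine Finset.prod_congr rfl fun g hg => ?_
  rw [h2 g hg]
  simp [B, hg]

include hμ in
lemma shift_measurePreserving (g : G) (σ : G → (G → Y₀) → (G → Y₀))
    (hσ : ∀ (g : G) (x : G → Y₀) (h : G), σ g x h = x (g⁻¹ * h)) :
    MeasurePreserving (σ g) μ μ := by
  have hσg : σ g = fun x h => x (g⁻¹ * h) := by
    funext x h; exact hσ g x h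
  have hmeas : Measurable (σ g) := by
    rw [hσg]; exact measurable_pi_lambda _ fun h => measurable_pi_apply _
  refine ⟨hmeas, ?_⟩
  have : IsProbabilityMeasure (μ.map (σ g)) := Measure.isProbabilityMeasure_map hmeas.aemeasurable
  refine ext_of_generate_finite (rectCyl G Y₀) generateFrom_rectCyl isPiSystem_rectCyl ?_
    (by simp)
  rintro S ⟨s, B, hB, rfl⟩
  classical
  rw [Measure.map_apply hmeas (measurableSet_rectCyl ⟨s, B, hB, rfl⟩)]
  have hpre : σ g ⁻¹' {x | ∀ h ∈ s, x h ∈ B h}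
      = {x | ∀ h ∈ s.image (fun k => g⁻¹ * k), x h ∈ B (g * h)} := by
    ext x
    simp only [Set.mem_preimage, Set.mem_setOf_eq, Finset.mem_image]
    constructor
    · rintro hx h ⟨k, hk, rfl⟩
      have := hx k hk
      rw [hσ] at this
      simpa [mul_inv_cancel_left] using this
    · intro hx k hk
      rw [hσ]
      have := hx (g⁻¹ * k) ⟨k, hk, rfl⟩
      simpa [mul_inv_cancel_left] using this
  rw [hpre, hμ _ (fun h => B (g * h)) (fun h => hB (g * h)),
    Finset.prod_image (by intro a _ b _ h; exact mul_left_cancel h),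
    hμ s B hB]
  refine Finset.prod_congr rfl fun k _ => ?_
  rw [mul_inv_cancel_left]

end Aux2

section Aux3
open scoped symmDiff

variable {X : Type*} [MeasurableSpace X] (μ : Measure X)

lemma meas_inter_le (A A' C C' : Set X) :
    μ (A ∩ C) ≤ μ (A' ∩ C') + μ (A ∆ A') + μ (C ∆ C') := by
  have hsub : A ∩ C ⊆ (A' ∩ C') ∪ (A ∆ A') ∪ (C ∆ C') := by
    intro x hx
    by_cases h1 : x ∈ A' <;> by_cases h2 : x ∈ C' <;>
      simp [Set.mem_symmDiff, hx.1, hx.2, h1, h2]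
  calc μ (A ∩ C) ≤ μ ((A' ∩ C') ∪ (A ∆ A') ∪ (C ∆ C')) := measure_mono hsub
    _ ≤ μ ((A' ∩ C') ∪ (A ∆ A')) + μ (C ∆ C') := measure_union_le _ _
    _ ≤ μ (A' ∩ C') + μ (A ∆ A') + μ (C ∆ C') := add_le_add_left (measure_union_le _ _) _

lemma meas_le_add_symmDiff (A A' : Set X) : μ A' ≤ μ A + μ (A ∆ A') := by
  have hsub : A' ⊆ A ∪ A ∆ A' := by
    intro x hx
    by_cases h : x ∈ A <;> simp [Set.mem_symmDiff, hx, h]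
  exact (measure_mono hsub).trans (measure_union_le _ _)

lemma meas_le_add_symmDiff' (A A' : Set X) : μ A ≤ μ A' + μ (A ∆ A') := by
  rw [symmDiff_comm]
  exact meas_le_add_symmDiff μ A' A

end Aux3

open scoped symmDiff
open scoped ENNReal

/-- The Bernoulli shift action of a countably infinite group `G` on the product
probability space `(Y₀^G, ⊗_g ν₀)` is measure-preserving and mixing: for all
measurable `A, B`, `μ(A ∩ σ_g⁻¹(B)) → μ(A)·μ(B)` as `g → ∞` (cofinite filter).
The product measure `μ` is characterized by its values on measurable cylinders. -/
theorem bernoulli_shift_measurePreserving_mixing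
    {G : Type*} [Group G] [Countable G] [Infinite G]
    {Y₀ : Type*} [MeasurableSpace Y₀] (ν₀ : Measure Y₀) [IsProbabilityMeasure ν₀]
    (μ : Measure (G → Y₀)) [IsProbabilityMeasure μ]
    (hμ : ∀ (s : Finset G) (B : G → Set Y₀), (∀ g : G, MeasurableSet (B g)) →
      μ {x : G → Y₀ | ∀ g ∈ s, x g ∈ B g} = ∏ g ∈ s, ν₀ (B g))
    (σ : G → (G → Y₀) → (G → Y₀))
    (hσ : ∀ (g : G) (x : G → Y₀) (h : G), σ g x h = x (g⁻¹ * h)) :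
    (∀ g : G, MeasurePreserving (σ g) μ μ) ∧
    ∀ A B : Set (G → Y₀), MeasurableSet A → MeasurableSet B →
      Tendsto (fun g : G => μ (A ∩ σ g ⁻¹' B)) cofinite (nhds (μ A * μ B)) := by
    classical
  have hmp : ∀ g : G, MeasurePreserving (σ g) μ μ :=
    fun g => shift_measurePreserving ν₀ μ hμ g σ hσ
  refine ⟨hmp, ?_⟩
  intro A B hA hB
  have hIndep := iIndep_eval ν₀ μ hμ
  have hdense := Measure.MeasureDense.of_generateFrom_isSetAlgebra_finite (μ := μ)
    (isSetAlgebra_cylAlg (G := G) (Y₀ := Y₀)) generateFrom_cylAlg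
  rw [ENNReal.tendsto_nhds (ENNReal.mul_ne_top (measure_ne_top μ A) (measure_ne_top μ B))]
  intro ε hε
  set ε' : ℝ≥0∞ := min ε 1 with hε'def
  have hε'0 : 0 < ε' := lt_min hε one_pos
  have hε'top : ε' ≠ ⊤ := ne_top_of_le_ne_top ENNReal.one_ne_top (min_le_right _ _)
  have hε'ε : ε' ≤ ε := min_le_left _ _
  have hε'1 : ε' ≤ 1 := min_le_right _ _
  set δ : ℝ≥0∞ := ε' / 8 with hδdef
  have hδtop : δ ≠ ⊤ := (ENNReal.div_lt_top hε'top (by norm_num)).ne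
  have hδ0 : 0 < δ := ENNReal.div_pos hε'0.ne' (by norm_num)
  have h8 : 8 * δ = ε' := ENNReal.mul_div_cancel' (by norm_num) (by norm_num)
  have h5 : δ + δ + δ + δ + δ ≤ ε := by
    have h58 : δ + δ + δ + δ + δ ≤ 8 * δ := by
      have : δ + δ + δ + δ + δ = 5 * δ := by ring
      rw [this]
      exact mul_le_mul_left (by norm_num) δ
    exact h58.trans (h8 ▸ hε'ε)
  set r := δ.toReal with hrdef
  have hr0 : 0 < r := ENNReal.toReal_pos hδ0.ne' hδtop
  have hrδ : ENNReal.ofReal r ≤ δ := le_of_eq (ENNReal.ofReal_toReal hδtop)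
  obtain ⟨A', hA'mem, hA'approx⟩ := hdense.approx A hA (measure_ne_top μ A) r hr0
  obtain ⟨B', hB'mem, hB'approx⟩ := hdense.approx B hB (measure_ne_top μ B) r hr0
  have hAA : μ (A ∆ A') ≤ δ := hA'approx.le.trans hrδ
  have hBB : μ (B ∆ B') ≤ δ := hB'approx.le.trans hrδ
  obtain ⟨s, E, hE, hA'rep⟩ := hA'mem
  obtain ⟨t, F, hF, hB'rep⟩ := hB'mem
  have hA'meas : MeasurableSet A' := hA'rep ▸ (measurable_restr s) hE
  have hB'meas : MeasurableSet B' := hB'rep ▸ (measurable_restr t) hF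
  set Sbad : Finset G := (t ×ˢ s).image (fun p => p.1 * p.2⁻¹) with hSbad
  filter_upwards [Sbad.eventually_cofinite_notMem] with g hg
  -- exact independence for good g
  have hprod : μ (A' ∩ σ g ⁻¹' B') = μ A' * μ B' := by
    set t' : Finset G := t.image (fun k => g⁻¹ * k) with ht'
    have hdisj : Disjoint s t' := by
      rw [Finset.disjoint_right]
      rintro k hkt' hks
      obtain ⟨i, hi, rfl⟩ := Finset.mem_image.mp hkt'
      refine hg (Finset.mem_image.mpr ⟨(i, g⁻¹ * i), Finset.mem_product.mpr ⟨hi, hks⟩, ?_⟩)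
      group
    have hind := hIndep.indepFun_finset s t' hdisj (fun i => measurable_pi_apply i)
    have hmem : ∀ i : t, (g⁻¹ * (i : G)) ∈ t' := fun i => Finset.mem_image_of_mem _ i.2
    set φ : (∀ _ : t', Y₀) → (∀ _ : t, Y₀) := fun y i => y ⟨g⁻¹ * (i : G), hmem i⟩ with hφ
    have hφmeas : Measurable φ := measurable_pi_lambda _ fun i => measurable_pi_apply _
    have hind2 := hind.comp measurable_id hφmeas
    have key := hind2.measure_inter_preimage_eq_mul E F hE hF
    have hA'eq : (id ∘ fun (a : G → Y₀) (i : s) => a (i : G)) ⁻¹' E = A' := by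
      rw [hA'rep]; rfl
    have hset : (φ ∘ fun (a : G → Y₀) (i : t') => a (i : G)) ⁻¹' F = σ g ⁻¹' B' := by
      rw [hB'rep]
      ext x
      simp only [Set.mem_preimage, Function.comp_apply]
      have hfun : φ (fun (i : t') => x (i : G)) = fun (i : t) => σ g x (i : G) := by
        funext i
        exact (hσ g x i).symm
      rw [hfun]
    rw [hA'eq, hset] at key
    rw [key, (hmp g).measure_preimage hB'meas.nullMeasurableSet]
  have hσpre : μ ((σ g ⁻¹' B) ∆ (σ g ⁻¹' B')) = μ (B ∆ B') := by
    rw [← Set.preimage_symmDiff, (hmp g).measure_preimage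
      (hB.symmDiff hB'meas).nullMeasurableSet]
  have hσpre' : μ ((σ g ⁻¹' B') ∆ (σ g ⁻¹' B)) ≤ δ := by
    rw [symmDiff_comm, hσpre]; exact hBB
  have ha1 : μ A ≤ 1 := prob_le_one
  have hb1 : μ B ≤ 1 := prob_le_one
  have hA'1 : μ A' ≤ 1 := prob_le_one
  have hB'1 : μ B' ≤ 1 := prob_le_one
  have hδ1 : δ ≤ 1 := by
    have : δ ≤ 8 * δ := le_mul_of_one_le_left zero_le (by norm_num)
    exact (this.trans_eq h8).trans hε'1
  have hA'le : μ A' ≤ μ A + δ := (meas_le_add_symmDiff μ A A').trans (add_le_add_right hAA _)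
  have hB'le : μ B' ≤ μ B + δ := (meas_le_add_symmDiff μ B B').trans (add_le_add_right hBB _)
  have hAle : μ A ≤ μ A' + δ := (meas_le_add_symmDiff' μ A A').trans (add_le_add_right hAA _)
  have hBle : μ B ≤ μ B' + δ := (meas_le_add_symmDiff' μ B B').trans (add_le_add_right hBB _)
  have hup : μ (A ∩ σ g ⁻¹' B) ≤ μ A * μ B + ε := by
    calc μ (A ∩ σ g ⁻¹' B)
        ≤ μ (A' ∩ σ g ⁻¹' B') + μ (A ∆ A') + μ ((σ g ⁻¹' B) ∆ (σ g ⁻¹' B')) :=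
          meas_inter_le μ _ _ _ _
      _ ≤ μ A' * μ B' + δ + δ := by rw [hprod, hσpre]; gcongr
      _ ≤ (μ A + δ) * (μ B + δ) + δ + δ := by gcongr
      _ = μ A * μ B + (μ A * δ + δ * μ B + δ * δ) + δ + δ := by ring
      _ ≤ μ A * μ B + (1 * δ + δ * 1 + δ * 1) + δ + δ := by gcongr
      _ = μ A * μ B + (δ + δ + δ + δ + δ) := by ring
      _ ≤ μ A * μ B + ε := by gcongr
  have hlow : μ A * μ B ≤ μ (A ∩ σ g ⁻¹' B) + ε := by
    calc μ A * μ B ≤ (μ A' + δ) * (μ B' + δ) := by gcongr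
      _ = μ A' * μ B' + (μ A' * δ + δ * μ B' + δ * δ) := by ring
      _ ≤ μ A' * μ B' + (1 * δ + δ * 1 + δ * 1) := by gcongr
      _ = μ (A' ∩ σ g ⁻¹' B') + (δ + δ + δ) := by rw [hprod]; ring
      _ ≤ (μ (A ∩ σ g ⁻¹' B) + μ (A' ∆ A) + μ ((σ g ⁻¹' B') ∆ (σ g ⁻¹' B))) + (δ + δ + δ) := by
          gcongr
          exact meas_inter_le μ _ _ _ _
      _ ≤ (μ (A ∩ σ g ⁻¹' B) + δ + δ) + (δ + δ + δ) := by
          gcongr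
          rw [symmDiff_comm]; exact hAA
      _ = μ (A ∩ σ g ⁻¹' B) + (δ + δ + δ + δ + δ) := by ring
      _ ≤ μ (A ∩ σ g ⁻¹' B) + ε := by gcongr
  exact ⟨tsub_le_iff_right.mpr hlow, hup⟩
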